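/- arXiv:1711.11229 — 4 statements merged into one kernel-verified Lean document; each statement's English description precedes it below -/
import Mathlib

section
/- Let n ≥ 2 and let 𝔄 : [0,∞) → [0,∞) be a strictly increasing differentiable bijection of [0,∞). Define: 𝔄̂(β) = 1/𝔄(1/β) for β > 0 (and 0 at 0); 𝔄_*⁻¹(σ) = 1/(σ^(1/n)·𝔄⁻¹(σ⁻¹)) for σ > 0 (and 0 at 0); 𝔄̃⁻¹(σ) = σ/𝔄⁻¹(σ) for σ > 0 (and 0 at 0); 𝔄̂̃⁻¹(σ) = σ·𝔄⁻¹(σ⁻¹) for σ > 0 (and 0 at 0). If both 𝔄 and 𝔄⁻¹ satisfy condition Δ_{ℝ⁺}, then each of the functions 𝔄̂, 𝔄_*⁻¹, 𝔄̃⁻¹ and 𝔄̂̃⁻¹ satisfies condition Δ_{ℝ⁺}, and there exists a constant M₀ > 0 such that 𝔄⁻¹(α)·𝔄⁻¹(α⁻¹) ≤ M₀ and α·𝔄⁻¹(𝔄̂(α⁻¹)) ≤ M₀ for all α > 0. -/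
open Set Filter

/-- Condition `Δ_{ℝ⁺}`: there is `M₀ > 0` with `f(αβ) ≤ M₀ f(α) f(β)` for all `α, β > 0`. -/
def DeltaRPlus (f : ℝ → ℝ) : Prop :=
  ∃ M₀ > (0:ℝ), ∀ α > (0:ℝ), ∀ β > (0:ℝ), f (α * β) ≤ M₀ * f α * f β

theorem stmt_4 (n : ℕ) (hn : 2 ≤ n)
    (𝔄 𝔄inv Ahat AstarInv AtilInv AhattilInv : ℝ → ℝ)
    -- `𝔄` is a strictly increasing differentiable bijection of `[0,∞)`
    (h𝔄mono : StrictMonoOn 𝔄 (Set.Ici 0))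
    (h𝔄diff : DifferentiableOn ℝ 𝔄 (Set.Ici 0))
    (h𝔄bij : Set.BijOn 𝔄 (Set.Ici 0) (Set.Ici 0))
    (h𝔄inv : ∀ α ≥ (0:ℝ), 𝔄inv (𝔄 α) = α ∧ 𝔄 (𝔄inv α) = α)
    -- `𝔄̂(β) = 1/𝔄(1/β)` for `β > 0`, and `0` at `0`
    (hAhat0 : Ahat 0 = 0)
    (hAhat : ∀ β > (0:ℝ), Ahat β = 1 / 𝔄 (1 / β))
    -- `𝔄_*⁻¹(σ) = 1/(σ^(1/n)·𝔄⁻¹(σ⁻¹))` for `σ > 0`, and `0` at `0`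
    (hAstarInv0 : AstarInv 0 = 0)
    (hAstarInv : ∀ σ > (0:ℝ), AstarInv σ = 1 / (σ ^ ((1:ℝ) / n) * 𝔄inv σ⁻¹))
    -- `𝔄̃⁻¹(σ) = σ/𝔄⁻¹(σ)` for `σ > 0`, and `0` at `0`
    (hAtilInv0 : AtilInv 0 = 0)
    (hAtilInv : ∀ σ > (0:ℝ), AtilInv σ = σ / 𝔄inv σ)
    -- `𝔄̂̃⁻¹(σ) = σ·𝔄⁻¹(σ⁻¹)` for `σ > 0`, and `0` at `0`
    (hAhattilInv0 : AhattilInv 0 = 0)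
    (hAhattilInv : ∀ σ > (0:ℝ), AhattilInv σ = σ * 𝔄inv σ⁻¹)
    (hd1 : DeltaRPlus 𝔄) (hd2 : DeltaRPlus 𝔄inv) :
    DeltaRPlus Ahat ∧ DeltaRPlus AstarInv ∧ DeltaRPlus AtilInv ∧ DeltaRPlus AhattilInv ∧
    ∃ M₀ > (0:ℝ), ∀ α > (0:ℝ),
      𝔄inv α * 𝔄inv α⁻¹ ≤ M₀ ∧ α * 𝔄inv (Ahat α⁻¹) ≤ M₀ := by
  obtain ⟨M₁, hM₁, hΔA⟩ := hd1
  obtain ⟨M₂, hM₂, hΔI⟩ := hd2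
  -- 𝔄 0 = 0
  have hA0 : 𝔄 0 = 0 := by
    obtain ⟨x, hx, hxe⟩ := h𝔄bij.surjOn (Set.self_mem_Ici)
    rcases eq_or_lt_of_le (show (0:ℝ) ≤ x from hx) with h | h
    · rw [← h] at hxe; exact hxe
    · have h1 := h𝔄mono (le_refl (0:ℝ)) hx h
      have h0 : (0:ℝ) ≤ 𝔄 0 := h𝔄bij.mapsTo Set.self_mem_Ici
      rw [hxe] at h1; linarith
  have hApos : ∀ x > (0:ℝ), 0 < 𝔄 x := by
    intro x hx
    have h1 := h𝔄mono (le_refl (0:ℝ)) (le_of_lt hx) hx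
    rwa [hA0] at h1
  have hInv : ∀ σ > (0:ℝ), 0 < 𝔄inv σ ∧ 𝔄 (𝔄inv σ) = σ := by
    intro σ hσ
    obtain ⟨x, hx, hxe⟩ := h𝔄bij.surjOn (show σ ∈ Ici 0 from le_of_lt hσ)
    have hxi : 𝔄inv σ = x := by rw [← hxe, (h𝔄inv x hx).1]
    have hx0 : 0 < x := by
      rcases eq_or_lt_of_le (show (0:ℝ) ≤ x from hx) with h | h
      · rw [← h, hA0] at hxe; linarith
      · exact h
    exact ⟨by rw [hxi]; exact hx0, by rw [hxi, hxe]⟩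
  -- 𝔄inv is monotone on positives
  have hInvMono : ∀ a > (0:ℝ), ∀ b > (0:ℝ), a ≤ b → 𝔄inv a ≤ 𝔄inv b := by
    intro a ha b hb hab
    by_contra h
    push_neg at h
    have h1 := h𝔄mono (le_of_lt (hInv b hb).1) (le_of_lt (hInv a ha).1) h
    rw [(hInv a ha).2, (hInv b hb).2] at h1
    linarith
  -- for p > 0, q > 0 : 𝔄 p ≤ q → p ≤ 𝔄inv q
  have hle : ∀ p > (0:ℝ), ∀ q > (0:ℝ), 𝔄 p ≤ q → p ≤ 𝔄inv q := by
    intro p hp q hq h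
    have := hInvMono (𝔄 p) (hApos p hp) q hq h
    rwa [(h𝔄inv p hp.le).1] at this
  -- 𝔄 is monotone (non-strict) on positives
  have hAmono : ∀ a > (0:ℝ), ∀ b > (0:ℝ), a ≤ b → 𝔄 a ≤ 𝔄 b := by
    intro a ha b hb hab
    rcases eq_or_lt_of_le hab with h | h
    · rw [h]
    · exact le_of_lt (h𝔄mono ha.le hb.le h)
  have hAM₂ : 0 < 𝔄 M₂ := hApos M₂ hM₂
  have hIM₁ : 0 < 𝔄inv M₁ := (hInv M₁ hM₁).1
  -- reverse Δ for 𝔄 : 𝔄 x * 𝔄 y ≤ (M₁ * 𝔄 M₂) * 𝔄 (x * y)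
  have hrevA : ∀ x > (0:ℝ), ∀ y > (0:ℝ), 𝔄 x * 𝔄 y ≤ (M₁ * 𝔄 M₂) * 𝔄 (x * y) := by
    intro x hx y hy
    have hpx := hApos x hx
    have hpy := hApos y hy
    have hp : 0 < 𝔄 x * 𝔄 y := mul_pos hpx hpy
    have h1 : 𝔄inv (𝔄 x * 𝔄 y) ≤ M₂ * (x * y) := by
      have h2 := hΔI (𝔄 x) hpx (𝔄 y) hpy
      rw [(h𝔄inv x hx.le).1, (h𝔄inv y hy.le).1] at h2
      linarith [h2]
    have h3 : 𝔄 (𝔄inv (𝔄 x * 𝔄 y)) ≤ 𝔄 (M₂ * (x * y)) :=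
      hAmono _ (hInv _ hp).1 _ (by positivity) h1
    rw [(hInv _ hp).2] at h3
    calc 𝔄 x * 𝔄 y ≤ 𝔄 (M₂ * (x * y)) := h3
      _ ≤ M₁ * 𝔄 M₂ * 𝔄 (x * y) := hΔA M₂ hM₂ (x * y) (by positivity)
  -- reverse Δ for 𝔄inv : 𝔄inv σ * 𝔄inv τ ≤ (M₂ * 𝔄inv M₁) * 𝔄inv (σ * τ)
  have hrevI : ∀ σ > (0:ℝ), ∀ τ > (0:ℝ),
      𝔄inv σ * 𝔄inv τ ≤ (M₂ * 𝔄inv M₁) * 𝔄inv (σ * τ) := by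
    intro σ hσ τ hτ
    have hpσ := (hInv σ hσ).1
    have hpτ := (hInv τ hτ).1
    have h1 : 𝔄 (𝔄inv σ * 𝔄inv τ) ≤ M₁ * (σ * τ) := by
      have h2 := hΔA (𝔄inv σ) hpσ (𝔄inv τ) hpτ
      rw [(hInv σ hσ).2, (hInv τ hτ).2] at h2
      linarith [h2]
    have h3 : 𝔄inv σ * 𝔄inv τ ≤ 𝔄inv (M₁ * (σ * τ)) :=
      hle _ (mul_pos hpσ hpτ) _ (by positivity) h1
    calc 𝔄inv σ * 𝔄inv τ ≤ 𝔄inv (M₁ * (σ * τ)) := h3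
      _ ≤ M₂ * 𝔄inv M₁ * 𝔄inv (σ * τ) := hΔI M₁ hM₁ (σ * τ) (by positivity)
  -- division helper
  have hdiv : ∀ a b c C : ℝ, 0 < a → 0 < b → 0 < c → a * b ≤ C * c →
      1 / c ≤ C * (1 / a) * (1 / b) := by
    intro a b c C ha hb hc h
    rw [div_le_iff₀ hc]
    have hC : 0 ≤ C := by nlinarith [mul_pos ha hb]
    have heq : C * (1 / a) * (1 / b) * c = C * c / (a * b) := by
      field_simp
    rw [heq, le_div_iff₀ (by positivity)]
    linarith
  constructor
  · -- Ahat
    refine ⟨M₁ * 𝔄 M₂, by positivity, ?_⟩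
    intro α hα β hβ
    have h1α : (0:ℝ) < 1 / α := by positivity
    have h1β : (0:ℝ) < 1 / β := by positivity
    have key := hrevA (1/α) h1α (1/β) h1β
    rw [hAhat _ (mul_pos hα hβ), hAhat _ hα, hAhat _ hβ]
    have heq : (1:ℝ)/α * (1/β) = 1/(α*β) := by field_simp
    rw [heq] at key
    exact hdiv _ _ _ _ (hApos _ h1α) (hApos _ h1β) (hApos _ (by positivity)) key
  refine ⟨?_, ?_, ?_, ?_⟩
  · -- AstarInv
    refine ⟨M₂ * 𝔄inv M₁, by positivity, ?_⟩
    intro α hα β hβ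
    have hiα : (0:ℝ) < α⁻¹ := by positivity
    have hiβ : (0:ℝ) < β⁻¹ := by positivity
    have key := hrevI α⁻¹ hiα β⁻¹ hiβ
    rw [← mul_inv] at key
    rw [hAstarInv _ (mul_pos hα hβ), hAstarInv _ hα, hAstarInv _ hβ]
    have hrpow : (α*β) ^ ((1:ℝ)/n) = α ^ ((1:ℝ)/n) * β ^ ((1:ℝ)/n) :=
      Real.mul_rpow hα.le hβ.le
    have hrα : (0:ℝ) < α ^ ((1:ℝ)/n) := Real.rpow_pos_of_pos hα _
    have hrβ : (0:ℝ) < β ^ ((1:ℝ)/n) := Real.rpow_pos_of_pos hβ _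
    have hIα := (hInv _ hiα).1
    have hIβ := (hInv _ hiβ).1
    have hIαβ := (hInv _ (show (0:ℝ) < (α*β)⁻¹ by positivity)).1
    rw [hrpow]
    have hmul : (α ^ ((1:ℝ)/n) * 𝔄inv α⁻¹) * (β ^ ((1:ℝ)/n) * 𝔄inv β⁻¹) ≤
        (M₂ * 𝔄inv M₁) * (α ^ ((1:ℝ)/n) * β ^ ((1:ℝ)/n) * 𝔄inv (α*β)⁻¹) := by
      nlinarith [mul_pos hrα hrβ, key, mul_le_mul_of_nonneg_left key
        (le_of_lt (mul_pos hrα hrβ))]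
    exact hdiv _ _ _ _ (by positivity) (by positivity) (by positivity) hmul
  · -- AtilInv
    refine ⟨M₂ * 𝔄inv M₁, by positivity, ?_⟩
    intro α hα β hβ
    have key := hrevI α hα β hβ
    have hIα := (hInv α hα).1
    have hIβ := (hInv β hβ).1
    have hIαβ := (hInv _ (mul_pos hα hβ)).1
    rw [hAtilInv _ (mul_pos hα hβ), hAtilInv _ hα, hAtilInv _ hβ]
    have h1 := hdiv _ _ _ _ hIα hIβ hIαβ key
    calc α * β / 𝔄inv (α * β) = (α * β) * (1 / 𝔄inv (α * β)) := by ring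
      _ ≤ (α * β) * (M₂ * 𝔄inv M₁ * (1 / 𝔄inv α) * (1 / 𝔄inv β)) :=
          mul_le_mul_of_nonneg_left h1 (by positivity)
      _ = M₂ * 𝔄inv M₁ * (α / 𝔄inv α) * (β / 𝔄inv β) := by ring
  · -- AhattilInv
    refine ⟨M₂, hM₂, ?_⟩
    intro α hα β hβ
    have hiα : (0:ℝ) < α⁻¹ := by positivity
    have hiβ : (0:ℝ) < β⁻¹ := by positivity
    have key := hΔI α⁻¹ hiα β⁻¹ hiβ
    rw [← mul_inv] at key
    rw [hAhattilInv _ (mul_pos hα hβ), hAhattilInv _ hα, hAhattilInv _ hβ]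
    calc α * β * 𝔄inv (α*β)⁻¹ ≤ α * β * (M₂ * 𝔄inv α⁻¹ * 𝔄inv β⁻¹) :=
        mul_le_mul_of_nonneg_left key (by positivity)
      _ = M₂ * (α * 𝔄inv α⁻¹) * (β * 𝔄inv β⁻¹) := by ring
  · -- the uniform bounds
    refine ⟨𝔄inv M₁, hIM₁, ?_⟩
    have hbound : ∀ σ > (0:ℝ), 𝔄inv σ * 𝔄inv σ⁻¹ ≤ 𝔄inv M₁ := by
      intro σ hσ
      have hiσ : (0:ℝ) < σ⁻¹ := by positivity
      have hIσ := (hInv σ hσ).1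
      have hIiσ := (hInv _ hiσ).1
      have h1 : 𝔄 (𝔄inv σ * 𝔄inv σ⁻¹) ≤ M₁ := by
        have h2 := hΔA (𝔄inv σ) hIσ (𝔄inv σ⁻¹) hIiσ
        rw [(hInv σ hσ).2, (hInv _ hiσ).2] at h2
        have h3 : M₁ * σ * σ⁻¹ = M₁ := by field_simp
        linarith [h2, h3]
      exact hle _ (mul_pos hIσ hIiσ) _ hM₁ h1
    intro α hα
    have hiα : (0:ℝ) < α⁻¹ := by positivity
    refine ⟨hbound α hα, ?_⟩
    have hAα := hApos α hα
    have hhat : Ahat α⁻¹ = (𝔄 α)⁻¹ := by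
      rw [hAhat _ hiα, one_div, one_div, inv_inv]
    have h2 : α * 𝔄inv (Ahat α⁻¹) = 𝔄inv (𝔄 α) * 𝔄inv (𝔄 α)⁻¹ := by
      rw [hhat, (h𝔄inv α hα.le).1]
    rw [h2]
    exact hbound (𝔄 α) hAα
end

section
/- Let n ≥ 2 and let A : [0,∞) → [0,∞) be a strictly increasing continuous bijection with ∫₀¹ A⁻¹(τ)/τ^((n+1)/n) dτ < ∞, and define A_*⁻¹(s) = ∫₀^s A⁻¹(τ)/τ^((n+1)/n) dτ for s ≥ 0. Suppose there exists a strictly increasing differentiable function 𝔄 : [0,∞) → [0,∞) such that A(α·t) ≥ 𝔄(α)·A(t) for all α ≥ 0 and t ≥ 0. Then for every α > 0 with 𝔄(α) > 0 and every t > 0, (α / 𝔄(α)^(1/n)) · A_*⁻¹( t / 𝔄(α) ) ≥ A_*⁻¹(t). -/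
open Set Filter MeasureTheory

theorem stmt_8 (n : ℕ) (hn : 2 ≤ n) (A Ainv : ℝ → ℝ)
    -- `A` is a strictly increasing continuous bijection of `[0,∞)` onto itself
    (hAmono : StrictMonoOn A (Set.Ici 0))
    (hAcont : ContinuousOn A (Set.Ici 0))
    (hAbij : Set.BijOn A (Set.Ici 0) (Set.Ici 0))
    (hAinv : ∀ t ≥ (0:ℝ), Ainv (A t) = t ∧ A (Ainv t) = t)
    -- `∫₀¹ A⁻¹(τ)/τ^((n+1)/n) dτ < ∞`
    (hint : IntegrableOn (fun τ => Ainv τ / τ ^ ((n + 1 : ℝ) / n)) (Set.Ioc 0 1))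
    (𝔄 : ℝ → ℝ)
    (h𝔄nonneg : ∀ α ≥ (0:ℝ), 0 ≤ 𝔄 α)
    (h𝔄mono : StrictMonoOn 𝔄 (Set.Ici 0))
    (h𝔄diff : DifferentiableOn ℝ 𝔄 (Set.Ici 0))
    (hlow : ∀ α ≥ (0:ℝ), ∀ t ≥ (0:ℝ), 𝔄 α * A t ≤ A (α * t)) :
    ∀ α > (0:ℝ), 0 < 𝔄 α → ∀ t > (0:ℝ),
      (∫ τ in Set.Ioc (0:ℝ) t, Ainv τ / τ ^ ((n + 1 : ℝ) / n)) ≤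
        (α / 𝔄 α ^ ((1:ℝ) / n)) *
          ∫ τ in Set.Ioc (0:ℝ) (t / 𝔄 α), Ainv τ / τ ^ ((n + 1 : ℝ) / n) := by
  intro α hα hc t ht
  set c := 𝔄 α with hcdef
  set p : ℝ := (n + 1 : ℝ) / n with hpdef
  set g : ℝ → ℝ := fun τ => Ainv τ / τ ^ p with hgdef
  have hn0 : (0:ℝ) < (n:ℝ) := by positivity
  have hp_pos : 0 < p := by positivity
  -- Ainv is nonneg on [0, ∞)
  have hAinv_nonneg : ∀ s ≥ (0:ℝ), 0 ≤ Ainv s := by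
    intro s hs
    obtain ⟨u, hu, hus⟩ := hAbij.surjOn hs
    have := (hAinv u hu).1
    rw [hus] at this
    rw [this]; exact hu
  -- Ainv is monotone on [0, ∞)
  have hAinv_mono : ∀ a ≥ (0:ℝ), ∀ b, a ≤ b → Ainv a ≤ Ainv b := by
    intro a ha b hab
    have hb : (0:ℝ) ≤ b := ha.trans hab
    have h1 := (hAinv a ha).2
    have h2 := (hAinv b hb).2
    have := (hAmono.le_iff_le (hAinv_nonneg a ha) (hAinv_nonneg b hb))
    rw [h1, h2] at this
    exact this.mp hab
  -- key pointwise inequality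
  have hkey : ∀ s ≥ (0:ℝ), Ainv (c * s) ≤ α * Ainv s := by
    intro s hs
    have hu : 0 ≤ Ainv s := hAinv_nonneg s hs
    have hAu : A (Ainv s) = s := (hAinv s hs).2
    have h1 := hlow α hα.le (Ainv s) hu
    rw [hAu] at h1
    have hcs : (0:ℝ) ≤ c * s := mul_nonneg hc.le hs
    have h2 := hAinv_mono (c * s) hcs (A (α * Ainv s)) h1
    rwa [(hAinv (α * Ainv s) (mul_nonneg hα.le hu)).1] at h2
  -- integrability of g on [0, T] for all T ≥ 0
  have hgInt : ∀ T ≥ (0:ℝ), IntervalIntegrable g volume 0 T := by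
    intro T hT
    have h01 : IntervalIntegrable g volume 0 1 :=
      (intervalIntegrable_iff_integrableOn_Ioc_of_le zero_le_one).mpr hint
    rcases le_or_gt T 1 with h | h
    · exact h01.mono_set (by rw [uIcc_of_le hT, uIcc_of_le zero_le_one]; exact Icc_subset_Icc le_rfl h)
    · refine h01.trans ?_
      have huIcc : uIcc (1:ℝ) T = Icc 1 T := uIcc_of_le h.le
      have hm : MonotoneOn Ainv (uIcc (1:ℝ) T) := by
        rw [huIcc]
        intro a ha b hb hab
        exact hAinv_mono a (by linarith [ha.1]) b hab
      have hcont : ContinuousOn (fun τ : ℝ => (τ ^ p)⁻¹) (uIcc (1:ℝ) T) := by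
        rw [huIcc]
        apply ContinuousOn.inv₀
        · intro x hx
          exact (Real.continuousAt_rpow_const x p (Or.inl (by linarith [hx.1]))).continuousWithinAt
        · intro x hx
          exact ne_of_gt (Real.rpow_pos_of_pos (by linarith [hx.1]) p)
      have := (hm.intervalIntegrable (μ := volume)).mul_continuousOn hcont
      simpa [hgdef, div_eq_mul_inv] using this
  -- the change of variables
  have hct : c * (t / c) = t := mul_div_cancel₀ t (ne_of_gt hc)
  have htc0 : (0:ℝ) ≤ t / c := le_of_lt (div_pos ht hc)
  have hcov : (c • ∫ x in (0:ℝ)..(t / c), g (c * x)) = ∫ x in (0:ℝ)..t, g x := by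
    rw [intervalIntegral.smul_integral_comp_mul_left g c, mul_zero, hct]
  -- integrability of x ↦ g (c x) on [0, t/c]
  have hgcInt : IntervalIntegrable (fun x => g (c * x)) volume 0 (t / c) := by
    have := (hgInt t ht.le).comp_mul_left (c := c)
    simpa [hct, zero_div] using this
  -- pointwise comparison on [0, t/c]
  have hpt : ∀ x ∈ Icc (0:ℝ) (t / c), g (c * x) ≤ α * c ^ (-p) * g x := by
    intro x hx
    rcases eq_or_lt_of_le hx.1 with hx0 | hx0
    · simp [hgdef, ← hx0, Real.zero_rpow (ne_of_gt hp_pos)]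
    · have hcx : 0 < c * x := mul_pos hc hx0
      have hrw : (c * x) ^ p = c ^ p * x ^ p := Real.mul_rpow hc.le hx0.le
      have hden : 0 < c ^ p * x ^ p :=
        mul_pos (Real.rpow_pos_of_pos hc p) (Real.rpow_pos_of_pos hx0 p)
      have hnum : Ainv (c * x) ≤ α * Ainv x := hkey x hx0.le
      have h1 : g (c * x) ≤ (α * Ainv x) / (c ^ p * x ^ p) := by
        rw [hgdef]; simp only
        rw [hrw]
        gcongr
      refine h1.trans_eq ?_
      rw [hgdef]; simp only
      rw [Real.rpow_neg hc.le, div_eq_mul_inv, div_eq_mul_inv, mul_inv]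
      ring
  -- integral comparison
  have hmono : (∫ x in (0:ℝ)..(t / c), g (c * x)) ≤
      ∫ x in (0:ℝ)..(t / c), α * c ^ (-p) * g x :=
    intervalIntegral.integral_mono_on htc0 hgcInt (((hgInt (t / c) htc0)).const_mul _) hpt
  have hconst : (∫ x in (0:ℝ)..(t / c), α * c ^ (-p) * g x) =
      α * c ^ (-p) * ∫ x in (0:ℝ)..(t / c), g x := by
    rw [← intervalIntegral.integral_const_mul]
  -- put together
  have hLHS : (∫ τ in Set.Ioc (0:ℝ) t, g τ) = ∫ x in (0:ℝ)..t, g x :=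
    (intervalIntegral.integral_of_le ht.le).symm
  have hRHS : (∫ τ in Set.Ioc (0:ℝ) (t / c), g τ) = ∫ x in (0:ℝ)..(t / c), g x :=
    (intervalIntegral.integral_of_le htc0).symm
  rw [hLHS, hRHS, ← hcov]
  have hfinal : c * (α * c ^ (-p)) = α / c ^ ((1:ℝ) / n) := by
    have hnne : (n:ℝ) ≠ 0 := hn0.ne'
    have h2 : -p + 1 = -((1:ℝ) / n) := by
      rw [hpdef]; field_simp; ring
    have h1 : c ^ (-p) * c = c ^ (-((1:ℝ) / n)) := by
      nth_rewrite 2 [← Real.rpow_one c]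
      rw [← Real.rpow_add hc, h2]
    calc c * (α * c ^ (-p)) = α * (c ^ (-p) * c) := by ring
      _ = α * c ^ (-((1:ℝ) / n)) := by rw [h1]
      _ = α / c ^ ((1:ℝ) / n) := by rw [Real.rpow_neg hc.le]; exact (div_eq_mul_inv α _).symm
  calc c • ∫ x in (0:ℝ)..(t / c), g (c * x)
      ≤ c • ∫ x in (0:ℝ)..(t / c), α * c ^ (-p) * g x := by
        exact smul_le_smul_of_nonneg_left hmono hc.le
    _ = α / c ^ ((1:ℝ) / n) * ∫ x in (0:ℝ)..(t / c), g x := by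
        rw [hconst, smul_eq_mul, ← mul_assoc, hfinal]
end

section
/- Let n ≥ 2 and let A : [0,∞) → [0,∞) be a strictly increasing continuous bijection with ∫₀¹ A⁻¹(τ)/τ^((n+1)/n) dτ < ∞; define A_*⁻¹(s) = ∫₀^s A⁻¹(τ)/τ^((n+1)/n) dτ and assume A_*⁻¹(s) → +∞ as s → +∞, so that A_* is defined as the inverse of A_*⁻¹ on [0,∞). Suppose there exists a strictly increasing differentiable bijection 𝔄 : [0,∞) → [0,∞) such that A(α·t) ≥ 𝔄(α)·A(t) for all α ≥ 0 and t ≥ 0. Then for every μ > 0, A_*( μ^(1 − 1/n) ) ≥ μ · A_*( μ / 𝔄⁻¹(μ) ). -/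
open Set Filter MeasureTheory

theorem stmt_9 (n : ℕ) (hn : 2 ≤ n) (A Ainv AstarInv Astar : ℝ → ℝ)
    -- `A` is a strictly increasing continuous bijection of `[0,∞)` onto itself
    (hAmono : StrictMonoOn A (Set.Ici 0))
    (hAcont : ContinuousOn A (Set.Ici 0))
    (hAbij : Set.BijOn A (Set.Ici 0) (Set.Ici 0))
    (hAinv : ∀ t ≥ (0:ℝ), Ainv (A t) = t ∧ A (Ainv t) = t)
    -- `∫₀¹ A⁻¹(τ)/τ^((n+1)/n) dτ < ∞`
    (hint : IntegrableOn (fun τ => Ainv τ / τ ^ ((n + 1 : ℝ) / n)) (Set.Ioc 0 1))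
    -- `A_*⁻¹(s) = ∫₀^s A⁻¹(τ)/τ^((n+1)/n) dτ`
    (hAstarInv : ∀ s ≥ (0:ℝ),
      AstarInv s = ∫ τ in Set.Ioc (0:ℝ) s, Ainv τ / τ ^ ((n + 1 : ℝ) / n))
    (hAstarInfty : Tendsto AstarInv atTop atTop)
    -- `A_*` is the inverse of `A_*⁻¹` on `[0,∞)`
    (hAstar : ∀ s ≥ (0:ℝ), Astar (AstarInv s) = s ∧ AstarInv (Astar s) = s)
    -- `𝔄` is a strictly increasing differentiable bijection of `[0,∞)`
    (𝔄 𝔄inv : ℝ → ℝ)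
    (h𝔄mono : StrictMonoOn 𝔄 (Set.Ici 0))
    (h𝔄diff : DifferentiableOn ℝ 𝔄 (Set.Ici 0))
    (h𝔄bij : Set.BijOn 𝔄 (Set.Ici 0) (Set.Ici 0))
    (h𝔄inv : ∀ α ≥ (0:ℝ), 𝔄inv (𝔄 α) = α ∧ 𝔄 (𝔄inv α) = α)
    (hlow : ∀ α ≥ (0:ℝ), ∀ t ≥ (0:ℝ), 𝔄 α * A t ≤ A (α * t)) :
    ∀ μ > (0:ℝ), μ * Astar (μ / 𝔄inv μ) ≤ Astar (μ ^ (1 - (1:ℝ) / n)) := by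
  have hn0 : (0:ℝ) < n := by exact_mod_cast (by omega : 0 < n)
  set p : ℝ := (n + 1 : ℝ) / n with hpdef
  have hp_pos : 0 < p := by positivity
  set f : ℝ → ℝ := fun τ => Ainv τ / τ ^ p with hfdef
  -- `Ainv` is nonnegative on `[0,∞)`
  have hAinv_nonneg : ∀ t ≥ (0:ℝ), 0 ≤ Ainv t := by
    intro t ht
    obtain ⟨a, ha, hAa⟩ := hAbij.surjOn (show t ∈ Ici (0:ℝ) from ht)
    have : Ainv t = a := by rw [← hAa]; exact (hAinv a ha).1
    rw [this]; exact ha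
  -- `Ainv` is monotone on `[0,∞)`
  have hAinv_mono : ∀ a ≥ (0:ℝ), ∀ b ≥ (0:ℝ), a ≤ b → Ainv a ≤ Ainv b := by
    intro a ha b hb hab
    have hia := hAinv_nonneg a ha
    have hib := hAinv_nonneg b hb
    have h1 : A (Ainv a) ≤ A (Ainv b) := by
      rw [(hAinv a ha).2, (hAinv b hb).2]; exact hab
    exact (hAmono.le_iff_le hia hib).mp h1
  -- `𝔄inv` is nonneg and positive at positive arguments
  have h𝔄inv_nonneg : ∀ t ≥ (0:ℝ), 0 ≤ 𝔄inv t := by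
    intro t ht
    obtain ⟨a, ha, hAa⟩ := h𝔄bij.surjOn (show t ∈ Ici (0:ℝ) from ht)
    have : 𝔄inv t = a := by rw [← hAa]; exact (h𝔄inv a ha).1
    rw [this]; exact ha
  have h𝔄0 : 𝔄 0 = 0 := by
    obtain ⟨a, ha, hAa⟩ := h𝔄bij.surjOn (Set.self_mem_Ici (a := (0:ℝ)))
    have h0 : (0:ℝ) ≤ 𝔄 0 := h𝔄bij.mapsTo (Set.self_mem_Ici (a := (0:ℝ)))
    have h1 : 𝔄 0 ≤ 𝔄 a := h𝔄mono.monotoneOn (Set.self_mem_Ici (a := (0:ℝ))) ha ha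
    rw [hAa] at h1
    linarith
  have h𝔄inv_pos : ∀ t > (0:ℝ), 0 < 𝔄inv t := by
    intro t ht
    rcases eq_or_lt_of_le (h𝔄inv_nonneg t ht.le) with h | h
    · exfalso
      have := (h𝔄inv t ht.le).2
      rw [← h, h𝔄0] at this; linarith
    · exact h
  -- key pointwise inequality
  have hkey : ∀ μ > (0:ℝ), ∀ σ ≥ (0:ℝ), Ainv (μ * σ) ≤ 𝔄inv μ * Ainv σ := by
    intro μ hμ σ hσ
    have hα : (0:ℝ) ≤ 𝔄inv μ := h𝔄inv_nonneg μ hμ.le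
    have hA1 : 𝔄 (𝔄inv μ) * A (Ainv σ) ≤ A (𝔄inv μ * Ainv σ) :=
      hlow (𝔄inv μ) hα (Ainv σ) (hAinv_nonneg σ hσ)
    rw [(h𝔄inv μ hμ.le).2, (hAinv σ hσ).2] at hA1
    have harg : (0:ℝ) ≤ 𝔄inv μ * Ainv σ := mul_nonneg hα (hAinv_nonneg σ hσ)
    have hAarg : (0:ℝ) ≤ A (𝔄inv μ * Ainv σ) := hAbij.mapsTo harg
    have := hAinv_mono (μ * σ) (mul_nonneg hμ.le hσ) (A (𝔄inv μ * Ainv σ)) hAarg hA1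
    rwa [(hAinv (𝔄inv μ * Ainv σ) harg).1] at this
  -- nonnegativity of the integrand
  have hf_nonneg : ∀ τ ≥ (0:ℝ), 0 ≤ f τ := by
    intro τ hτ
    exact div_nonneg (hAinv_nonneg τ hτ) (Real.rpow_nonneg hτ p)
  -- integrability on every `Ioc 0 s`
  have hf_int : ∀ s ≥ (0:ℝ), IntegrableOn f (Set.Ioc 0 s) := by
    intro s hs
    rcases le_or_gt s 1 with h | h
    · exact hint.mono_set (Ioc_subset_Ioc_right h)
    · have h1 : IntegrableOn f (Set.Ioc 0 1) := hint
      have h2 : IntegrableOn f (Set.Ioc 1 s) := by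
        rw [← intervalIntegrable_iff_integrableOn_Ioc_of_le h.le]
        have hmono : MonotoneOn Ainv (uIcc 1 s) := by
          intro a ha b hb hab
          rw [uIcc_of_le h.le] at ha hb
          exact hAinv_mono a (by linarith [ha.1]) b (by linarith [hb.1]) hab
        have hInt1 : IntervalIntegrable Ainv volume 1 s := hmono.intervalIntegrable
        have hcont : ContinuousOn (fun τ : ℝ => (τ ^ p)⁻¹) (uIcc 1 s) := by
          apply ContinuousOn.inv₀
          · exact ContinuousOn.rpow_const continuousOn_id (fun x hx => by
              rw [uIcc_of_le h.le] at hx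
              have h1 : (1:ℝ) ≤ x := hx.1
              exact Or.inl (by positivity))
          · intro x hx
            rw [uIcc_of_le h.le] at hx
            have : (1:ℝ) ≤ x := hx.1
            positivity
        have := hInt1.mul_continuousOn hcont
        simpa [hfdef, div_eq_mul_inv] using this
      have := h1.union h2
      rwa [Ioc_union_Ioc_eq_Ioc (by norm_num : (0:ℝ) ≤ 1) h.le] at this
  have hf_ii : ∀ s ≥ (0:ℝ), IntervalIntegrable f volume 0 s := by
    intro s hs
    rw [intervalIntegrable_iff_integrableOn_Ioc_of_le hs]
    exact hf_int s hs
  -- AstarInv as an interval integral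
  have hF : ∀ s ≥ (0:ℝ), AstarInv s = ∫ τ in (0:ℝ)..s, f τ := by
    intro s hs
    rw [hAstarInv s hs, intervalIntegral.integral_of_le hs]
  have hF0 : AstarInv 0 = 0 := by
    simp [hF 0 (le_refl 0)]
  -- monotonicity of AstarInv on [0,∞)
  have hF_mono : ∀ a ≥ (0:ℝ), ∀ b, a ≤ b → AstarInv a ≤ AstarInv b := by
    intro a ha b hab
    have hb : (0:ℝ) ≤ b := le_trans ha hab
    rw [hF a ha, hF b hb]
    have hi1 : IntervalIntegrable f volume 0 a := hf_ii a ha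
    have hi2 : IntervalIntegrable f volume a b := by
      rw [intervalIntegrable_iff_integrableOn_Ioc_of_le hab]
      exact (hf_int b hb).mono_set (Ioc_subset_Ioc_left ha)
    rw [← intervalIntegral.integral_add_adjacent_intervals hi1 hi2]
    have : 0 ≤ ∫ τ in a..b, f τ :=
      intervalIntegral.integral_nonneg hab (fun u hu => hf_nonneg u (le_trans ha hu.1))
    linarith
  -- every s ≥ 0 is attained by AstarInv at a nonneg point, and Astar s is that point
  have hAstar_char : ∀ s ≥ (0:ℝ), 0 ≤ Astar s ∧ AstarInv (Astar s) = s := by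
    intro s hs
    obtain ⟨b, hb⟩ := ((hAstarInfty.eventually (eventually_ge_atTop s)).and
      (eventually_ge_atTop (0:ℝ))).exists
    have hcont : ContinuousOn AstarInv (Icc 0 b) := by
      have hint' : IntegrableOn f (Icc 0 b) := by
        rw [integrableOn_Icc_iff_integrableOn_Ioc]
        exact hf_int b hb.2
      have := intervalIntegral.continuousOn_primitive hint'
      apply ContinuousOn.congr this
      intro x hx
      exact hAstarInv x hx.1
    have hIVT := intermediate_value_Icc hb.2 hcont
    have hsmem : s ∈ Icc (AstarInv 0) (AstarInv b) := by
      rw [hF0]; exact ⟨hs, hb.1⟩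
    obtain ⟨u, hu, huv⟩ := hIVT hsmem
    have h1 : Astar s = u := by rw [← huv, (hAstar u hu.1).1]
    exact ⟨h1 ▸ hu.1, h1 ▸ huv⟩
  -- the main scaling estimate
  have hscale : ∀ μ > (0:ℝ), ∀ t ≥ (0:ℝ),
      AstarInv (μ * t) ≤ μ * (μ ^ (-p) * 𝔄inv μ * AstarInv t) := by
    intro μ hμ t ht
    have hμt : (0:ℝ) ≤ μ * t := mul_nonneg hμ.le ht
    rw [hF (μ * t) hμt, hF t ht]
    have hsub : (∫ τ in (0:ℝ)..(μ*t), f τ) = μ * ∫ σ in (0:ℝ)..t, f (μ * σ) := by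
      have := intervalIntegral.smul_integral_comp_mul_left f (a := 0) (b := t) μ
      simp only [mul_zero, smul_eq_mul] at this
      rw [← this]
    rw [hsub]
    have hmono : (∫ σ in (0:ℝ)..t, f (μ * σ)) ≤
        ∫ σ in (0:ℝ)..t, μ ^ (-p) * 𝔄inv μ * f σ := by
      apply intervalIntegral.integral_mono_on ht
      · have := (hf_ii (μ*t) hμt).comp_mul_left (c := μ)
        simpa [mul_div_assoc, mul_div_cancel_left₀ _ (ne_of_gt hμ)] using this
      · exact (hf_ii t ht).const_mul _
      · intro σ hσ
        rcases eq_or_lt_of_le hσ.1 with h0 | h0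
        · simp [hfdef, ← h0, Real.zero_rpow (ne_of_gt hp_pos)]
        · have hμσ : 0 < μ * σ := mul_pos hμ h0
          have hrp : (μ * σ) ^ p = μ ^ p * σ ^ p := Real.mul_rpow hμ.le h0.le
          have hAle : Ainv (μ * σ) ≤ 𝔄inv μ * Ainv σ := hkey μ hμ σ h0.le
          have hμp : (0:ℝ) < μ ^ p := Real.rpow_pos_of_pos hμ p
          have hσp : (0:ℝ) < σ ^ p := Real.rpow_pos_of_pos h0 p
          have h1 : f (μ * σ) = Ainv (μ * σ) / (μ ^ p * σ ^ p) := by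
            rw [hfdef]; simp only; rw [hrp]
          have h2 : μ ^ (-p) * 𝔄inv μ * f σ = (𝔄inv μ * Ainv σ) / (μ ^ p * σ ^ p) := by
            rw [hfdef]; simp only
            rw [Real.rpow_neg hμ.le]
            field_simp
          rw [h1, h2]
          exact (div_le_div_iff_of_pos_right (by positivity)).mpr hAle
    calc μ * ∫ σ in (0:ℝ)..t, f (μ * σ)
        ≤ μ * ∫ σ in (0:ℝ)..t, μ ^ (-p) * 𝔄inv μ * f σ :=
          mul_le_mul_of_nonneg_left hmono hμ.le
      _ = μ * (μ ^ (-p) * 𝔄inv μ * ∫ σ in (0:ℝ)..t, f σ) := by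
          rw [intervalIntegral.integral_const_mul]
  -- final assembly
  intro μ hμ
  have hc : 0 < 𝔄inv μ := h𝔄inv_pos μ hμ
  have hs0 : (0:ℝ) ≤ μ / 𝔄inv μ := le_of_lt (div_pos hμ hc)
  obtain ⟨ht0, hAi0⟩ := hAstar_char (μ / 𝔄inv μ) hs0
  set t₀ := Astar (μ / 𝔄inv μ) with ht₀def
  have hb : (0:ℝ) ≤ μ ^ (1 - (1:ℝ) / n) := Real.rpow_nonneg hμ.le _
  obtain ⟨hu0, hAib⟩ := hAstar_char (μ ^ (1 - (1:ℝ) / n)) hb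
  set u := Astar (μ ^ (1 - (1:ℝ) / n)) with hudef
  -- the scaling estimate gives AstarInv (μ * t₀) ≤ μ ^ (1 - 1/n)
  have hest : AstarInv (μ * t₀) ≤ μ ^ (1 - (1:ℝ) / n) := by
    have := hscale μ hμ t₀ ht0
    rw [hAi0] at this
    have heq : μ * (μ ^ (-p) * 𝔄inv μ * (μ / 𝔄inv μ)) = μ ^ (1 - (1:ℝ) / n) := by
      have hcancel : 𝔄inv μ * (μ / 𝔄inv μ) = μ := by field_simp
      rw [mul_assoc, hcancel]
      have hμ1 : μ * (μ ^ (-p) * μ) = μ ^ ((1:ℝ) + -p + 1) := by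
        rw [Real.rpow_add hμ, Real.rpow_add hμ, Real.rpow_one]; ring
      rw [hμ1]
      congr 1
      rw [hpdef]
      have hne : (n:ℝ) ≠ 0 := ne_of_gt hn0
      field_simp
      ring
    linarith [heq ▸ this]
  -- conclude
  by_contra hcon
  push_neg at hcon
  have hlt : u < μ * t₀ := hcon
  have hμt0 : (0:ℝ) ≤ μ * t₀ := mul_nonneg hμ.le ht0
  have h1 : AstarInv u ≤ AstarInv (μ * t₀) := hF_mono u hu0 (μ * t₀) hlt.le
  rw [hAib] at h1
  have h2 : AstarInv (μ * t₀) = μ ^ (1 - (1:ℝ) / n) := le_antisymm hest h1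
  have h3 : Astar (AstarInv (μ * t₀)) = μ * t₀ := (hAstar (μ * t₀) hμt0).1
  rw [h2, ← hudef] at h3
  linarith
end

section
/- Let n ≥ 2 and let 𝔄 : [0,∞) → [0,∞) be a strictly increasing differentiable bijection of [0,∞) satisfying n·𝔄(α) > α·𝔄'(α) > 𝔄(α) for all α > 0, and define 𝔄_*⁻¹(σ) = 1/(σ^(1/n)·𝔄⁻¹(σ⁻¹)) for σ > 0. Suppose there exists a strictly increasing continuous bijection A : [0,∞) → [0,∞) with A(α·t) ≥ 𝔄(α)·A(t) for all α ≥ 0 and t ≥ 0, such that ∫₀¹ A⁻¹(τ)/τ^((n+1)/n) dτ < ∞ and A_*⁻¹(s) = ∫₀^s A⁻¹(τ)/τ^((n+1)/n) dτ tends to +∞ as s → +∞. Then for every μ > 0, 𝔄_*⁻¹(μ)·μ ≤ μ^(1 − 1/n)·𝔄⁻¹(μ). -/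
open Set Filter MeasureTheory

theorem stmt_10 (n : ℕ) (hn : 2 ≤ n)
    -- `𝔄` is a strictly increasing differentiable bijection of `[0,∞)`
    (𝔄 𝔄' 𝔄inv 𝔄starInv : ℝ → ℝ)
    (h𝔄mono : StrictMonoOn 𝔄 (Set.Ici 0))
    (h𝔄bij : Set.BijOn 𝔄 (Set.Ici 0) (Set.Ici 0))
    (h𝔄deriv : ∀ α ∈ Set.Ici (0:ℝ), HasDerivWithinAt 𝔄 (𝔄' α) (Set.Ici 0) α)
    (h𝔄inv : ∀ α ≥ (0:ℝ), 𝔄inv (𝔄 α) = α ∧ 𝔄 (𝔄inv α) = α)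
    -- `n·𝔄(α) > α·𝔄'(α) > 𝔄(α)` for all `α > 0`
    (hcond : ∀ α > (0:ℝ), 𝔄 α < α * 𝔄' α ∧ α * 𝔄' α < n * 𝔄 α)
    -- `𝔄_*⁻¹(σ) = 1/(σ^(1/n)·𝔄⁻¹(σ⁻¹))` for `σ > 0`
    (h𝔄starInv0 : 𝔄starInv 0 = 0)
    (h𝔄starInv : ∀ σ > (0:ℝ), 𝔄starInv σ = 1 / (σ ^ ((1:ℝ) / n) * 𝔄inv σ⁻¹))
    -- there exists a strictly increasing continuous bijection `A` of `[0,∞)`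
    -- with `A(αt) ≥ 𝔄(α)A(t)`, integrable inverse near `0`, and `A_*⁻¹(s) → ∞`
    (A Ainv : ℝ → ℝ)
    (hAmono : StrictMonoOn A (Set.Ici 0))
    (hAcont : ContinuousOn A (Set.Ici 0))
    (hAbij : Set.BijOn A (Set.Ici 0) (Set.Ici 0))
    (hAinv : ∀ t ≥ (0:ℝ), Ainv (A t) = t ∧ A (Ainv t) = t)
    (hlow : ∀ α ≥ (0:ℝ), ∀ t ≥ (0:ℝ), 𝔄 α * A t ≤ A (α * t))
    (hint : IntegrableOn (fun τ => Ainv τ / τ ^ ((n + 1 : ℝ) / n)) (Set.Ioc 0 1))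
    (hAstarInfty : Tendsto
      (fun s => ∫ τ in Set.Ioc (0:ℝ) s, Ainv τ / τ ^ ((n + 1 : ℝ) / n)) atTop atTop) :
    ∀ μ > (0:ℝ), 𝔄starInv μ * μ ≤ μ ^ (1 - (1:ℝ) / n) * 𝔄inv μ := by

  -- `𝔄 0 = 0` and `A 0 = 0`
  have h𝔄0 : 𝔄 0 = 0 := by
    obtain ⟨α, hα, hαeq⟩ := h𝔄bij.2.2 (Set.mem_Ici.2 (le_refl (0:ℝ)))
    rcases eq_or_lt_of_le (Set.mem_Ici.1 hα) with h | h
    · rw [← h] at hαeq; exact hαeq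
    · have h1 := h𝔄mono (Set.mem_Ici.2 le_rfl) hα h
      have h2 : (0:ℝ) ≤ 𝔄 0 := Set.mem_Ici.1 (h𝔄bij.1 (Set.mem_Ici.2 le_rfl))
      rw [hαeq] at h1; linarith
  have hA0 : A 0 = 0 := by
    obtain ⟨t, ht, hteq⟩ := hAbij.2.2 (Set.mem_Ici.2 (le_refl (0:ℝ)))
    rcases eq_or_lt_of_le (Set.mem_Ici.1 ht) with h | h
    · rw [← h] at hteq; exact hteq
    · have h1 := hAmono (Set.mem_Ici.2 le_rfl) ht h
      have h2 : (0:ℝ) ≤ A 0 := Set.mem_Ici.1 (hAbij.1 (Set.mem_Ici.2 le_rfl))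
      rw [hteq] at h1; linarith
  have hA1 : 0 < A 1 := by
    have := hAmono (Set.mem_Ici.2 le_rfl) (Set.mem_Ici.2 zero_le_one) zero_lt_one
    rwa [hA0] at this
  -- key submultiplicativity: `𝔄 α * 𝔄 α⁻¹ ≤ 1`
  have key : ∀ α : ℝ, 0 < α → 𝔄 α * 𝔄 α⁻¹ ≤ 1 := by
    intro α hα
    have h1 := hlow α hα.le α⁻¹ (inv_pos.2 hα).le
    rw [mul_inv_cancel₀ hα.ne'] at h1
    have h2 := hlow α⁻¹ (inv_pos.2 hα).le 1 zero_le_one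
    rw [mul_one] at h2
    have h𝔄nn : 0 ≤ 𝔄 α := Set.mem_Ici.1 (h𝔄bij.1 (Set.mem_Ici.2 hα.le))
    nlinarith [mul_le_mul_of_nonneg_left h2 h𝔄nn]
  intro μ hμ
  obtain ⟨a, ha, haeq⟩ := h𝔄bij.2.2 (Set.mem_Ici.2 hμ.le)
  obtain ⟨b, hb, hbeq⟩ := h𝔄bij.2.2 (Set.mem_Ici.2 (inv_pos.2 hμ).le)
  have hainv : 𝔄inv μ = a := by rw [← haeq]; exact (h𝔄inv a (Set.mem_Ici.1 ha)).1
  have hbinv : 𝔄inv μ⁻¹ = b := by rw [← hbeq]; exact (h𝔄inv b (Set.mem_Ici.1 hb)).1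
  have hapos : 0 < a := by
    rcases eq_or_lt_of_le (Set.mem_Ici.1 ha) with h | h
    · rw [← h, h𝔄0] at haeq; exact absurd haeq.symm hμ.ne'
    · exact h
  have hbpos : 0 < b := by
    rcases eq_or_lt_of_le (Set.mem_Ici.1 hb) with h | h
    · rw [← h, h𝔄0] at hbeq
      exact absurd hbeq.symm (inv_pos.2 hμ).ne'
    · exact h
  have hab : 1 ≤ a * b := by
    by_contra hcon
    push_neg at hcon
    have hblt : b < a⁻¹ := by
      have h1 : a * b < a * a⁻¹ := by rw [mul_inv_cancel₀ hapos.ne']; exact hcon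
      exact lt_of_mul_lt_mul_left h1 hapos.le
    have hmono := h𝔄mono (Set.mem_Ici.2 hbpos.le)
      (Set.mem_Ici.2 (inv_pos.2 hapos).le) hblt
    rw [hbeq] at hmono
    have hkey := key a hapos
    rw [haeq] at hkey
    have hμinv := mul_inv_cancel₀ hμ.ne'
    nlinarith
  -- conclude
  rw [h𝔄starInv μ hμ, hainv, hbinv]
  have hpow : (0:ℝ) < μ ^ ((1:ℝ)/n) := Real.rpow_pos_of_pos hμ _
  rw [show (1 - (1:ℝ)/n) = 1 - (1:ℝ)/n from rfl, Real.rpow_sub hμ, Real.rpow_one]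
  rw [div_mul_eq_mul_div, one_mul, div_le_iff₀ (by positivity)]
  have heq : μ / μ ^ ((1:ℝ)/n) * a * (μ ^ ((1:ℝ)/n) * b) = μ * (a * b) := by
    field_simp
  rw [heq]
  nlinarith
end
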